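/- arXiv:2508.06875 — 2 statements merged into one kernel-verified Lean document; each statement's English description precedes it below -/
import Mathlib

section
/- Suppose t_r ∈ (0,1) satisfies lim_{k→∞} (1/k)·log I_{k,r}(t_r) = 0. Then there exist a Borel probability measure λ on Φ_∞ and constants 0 < c ≤ C < ∞ such that for every σ ∈ Φ^*: c · E_r(σ)^{t_r} ≤ λ([σ]) ≤ C · E_r(σ)^{t_r}. -/
open Filter MeasureTheory
open scoped BigOperators ENNReal NNReal Topology

namespace LGQ

noncomputable section

/-- The alphabet `G = {(i,j) : 1 ≤ i ≤ n_j, 1 ≤ j ≤ m}`, encoded as a sigma type: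
an element is `⟨j, i⟩` with `j : Fin m` (the `y`-coordinate) and `i : Fin (n j)`. -/
abbrev Alph (m : ℕ) (n : Fin m → ℕ) := Σ j : Fin m, Fin (n j)

/-- A pair `σ = (σ_L, σ_R)` with `σ_L ∈ G^*` and `σ_R ∈ G_y^*`. -/
abbrev Wd (m : ℕ) (n : Fin m → ℕ) := List (Alph m n) × List (Fin m)

variable {m : ℕ} {n : Fin m → ℕ}

/-- `a_ω := ∏ a_{i_h j_h}` along a word `ω ∈ G^*`. -/
def aP (a : Alph m n → ℝ) (w : List (Alph m n)) : ℝ := (w.map a).prod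

/-- `b_τ := ∏ b_{j_h}` along a word `τ ∈ G_y^*`. -/
def bP (b : Fin m → ℝ) (τ : List (Fin m)) : ℝ := (τ.map b).prod

/-- `σ_y := (σ_L)_y ∗ σ_R` : the `y`-word of a pair `σ = σ_L ∗ σ_R`. -/
def sy (σ : Wd m n) : List (Fin m) := σ.1.map Sigma.fst ++ σ.2

/-- `Ψ_l := {σ = σ_L ∗ σ_R : σ_L ∈ G^l, σ_R ∈ G_y^*, b_{(σ_y)^-} ≥ a_{σ_L} > b_{σ_y}}`. -/
def Psi (a : Alph m n → ℝ) (b : Fin m → ℝ) (l : ℕ) : Set (Wd m n) :=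
  {σ | σ.1.length = l ∧ 1 ≤ σ.2.length ∧
    aP a σ.1 ≤ bP b (sy σ).dropLast ∧ bP b (sy σ) < aP a σ.1}

/-- `Ψ^* := ⋃_{l ≥ 1} Ψ_l`. -/
def PsiStar (a : Alph m n → ℝ) (b : Fin m → ℝ) : Set (Wd m n) :=
  {σ | ∃ l, 1 ≤ l ∧ σ ∈ Psi a b l}

/-- `q_j := Σ_{i=1}^{n_j} p_{ij}`. -/
def qf (p : Alph m n → ℝ) (j : Fin m) : ℝ := ∑ i : Fin (n j), p ⟨j, i⟩

/-- `p_{σ_L} := ∏ p_{i_h j_h}`. -/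
def pP (p : Alph m n → ℝ) (w : List (Alph m n)) : ℝ := (w.map p).prod

/-- `q_{σ_R} := ∏ q_{j_h}`. -/
def qP (p : Alph m n → ℝ) (τ : List (Fin m)) : ℝ := (τ.map (qf p)).prod

/-- `E_r(σ) := p_{σ_L} q_{σ_R} a_{σ_L}^r` (note `E_r(θ) = 1`). -/
def Er (a p : Alph m n → ℝ) (r : ℝ) (σ : Wd m n) : ℝ :=
  pP p σ.1 * qP p σ.2 * aP a σ.1 ^ r

/-- `a̲ := min a_{ij}`. -/
def aLo (a : Alph m n → ℝ) : ℝ := ⨅ g, a g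

/-- `ā := max a_{ij}`. -/
def aHi (a : Alph m n → ℝ) : ℝ := ⨆ g, a g

/-- `b̲ := min b_j`. -/
def bLo (b : Fin m → ℝ) : ℝ := ⨅ j, b j

/-- `b̄ := max b_j`. -/
def bHi (b : Fin m → ℝ) : ℝ := ⨆ j, b j

/-- `p̲ := min p_{ij}`. -/
def pLo (p : Alph m n → ℝ) : ℝ := ⨅ g, p g

/-- `q̲ := min q_j`. -/
def qLo (p : Alph m n → ℝ) : ℝ := ⨅ j, qf p j

/-- `A_1 := ⌊log a̲ / log b̄⌋ + 1`. -/
def A1 (a : Alph m n → ℝ) (b : Fin m → ℝ) : ℤ :=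
  ⌊Real.log (aLo a) / Real.log (bHi b)⌋ + 1

/-- `A_2 := ⌊log b̲ / log ā⌋ + 1`. -/
def A2 (a : Alph m n → ℝ) (b : Fin m → ℝ) : ℤ :=
  ⌊Real.log (bLo b) / Real.log (aHi a)⌋ + 1

/-- `A_3 := max_{(i,j)∈G} a_{ij}/b_j`. -/
def A3 (a : Alph m n → ℝ) (b : Fin m → ℝ) : ℝ := ⨆ g : Alph m n, a g / b g.1

/-- `A_4 := log A_3 / log b̲`. -/
def A4 (a : Alph m n → ℝ) (b : Fin m → ℝ) : ℝ := Real.log (A3 a b) / Real.log (bLo b)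

/-- `A_6 := ⌊1/A_4⌋`. -/
def A6 (a : Alph m n → ℝ) (b : Fin m → ℝ) : ℤ := ⌊1 / A4 a b⌋

/-- `η̲_r := p̲ q̲^{A_1} a̲^r`. -/
def etaLo (a : Alph m n → ℝ) (b : Fin m → ℝ) (p : Alph m n → ℝ) (r : ℝ) : ℝ :=
  pLo p * qLo p ^ A1 a b * aLo a ^ r

/-- `A_{5,r} := ⌊log(q̲² η̲_r)/(r·log ā)⌋`. -/
def A5 (a : Alph m n → ℝ) (b : Fin m → ℝ) (p : Alph m n → ℝ) (r : ℝ) : ℤ :=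
  ⌊Real.log (qLo p ^ 2 * etaLo a b p r) / (r * Real.log (aHi a))⌋

/-- `T_{1,r} := ⌊(A_1 + A_{5,r} + 3)/A_4⌋`. -/
def T1 (a : Alph m n → ℝ) (b : Fin m → ℝ) (p : Alph m n → ℝ) (r : ℝ) : ℤ :=
  ⌊((A1 a b + A5 a b p r + 3 : ℤ) : ℝ) / A4 a b⌋

/-- `ρ = σ^♭`:  for `σ ∈ Ψ_1`, `σ^♭ = θ`; for `σ ∈ Ψ_l` with `l ≥ 2`, `σ^♭` is the unique
`ρ ∈ Ψ_{l-1}` with `ρ_L = (σ_L)^-` and `ρ_y` an initial segment of `σ_y`. -/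
def IsFlat (a : Alph m n → ℝ) (b : Fin m → ℝ) (σ ρ : Wd m n) : Prop :=
  (σ.1.length = 1 ∧ ρ = (([], []) : Wd m n)) ∨
  (2 ≤ σ.1.length ∧ ρ ∈ Psi a b (σ.1.length - 1) ∧ ρ.1 = σ.1.dropLast ∧ sy ρ <+: sy σ)

/-- `Λ_{n,r} := {σ ∈ Ψ^* : E_r(σ^♭) ≥ η̲_r^n > E_r(σ)}`. -/
def Lam (a : Alph m n → ℝ) (b : Fin m → ℝ) (p : Alph m n → ℝ) (r : ℝ) (N : ℕ) :
    Set (Wd m n) :=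
  {σ | σ ∈ PsiStar a b ∧ ∃ ρ : Wd m n, IsFlat a b σ ρ ∧
    etaLo a b p r ^ N ≤ Er a p r ρ ∧ Er a p r σ < etaLo a b p r ^ N}

/-- `S_{n,r} := {σ ∈ Ψ^* : η̲_r^{n+1} ≤ E_r(σ) < η̲_r^n}`. -/
def Snr (a : Alph m n → ℝ) (b : Fin m → ℝ) (p : Alph m n → ℝ) (r : ℝ) (N : ℕ) :
    Set (Wd m n) :=
  {σ | σ ∈ PsiStar a b ∧ etaLo a b p r ^ (N + 1) ≤ Er a p r σ ∧
    Er a p r σ < etaLo a b p r ^ N}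

/-- `G_1(σ) := {ω ∈ S_{n,r} : σ_L ⪯ ω_L and σ_y ⪯ ω_y}`. -/
def G1 (a : Alph m n → ℝ) (b : Fin m → ℝ) (p : Alph m n → ℝ) (r : ℝ) (N : ℕ)
    (σ : Wd m n) : Set (Wd m n) :=
  {ω | ω ∈ Snr a b p r N ∧ σ.1 <+: ω.1 ∧ sy σ <+: sy ω}

/-- `Λ_h(σ) := {ρ ∈ Φ_{l+h} : σ ⪯ ρ}` (componentwise order on pairs). -/
def LamH (a : Alph m n → ℝ) (b : Fin m → ℝ) (σ : Wd m n) (h : ℕ) : Set (Wd m n) :=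
  {ρ | ρ ∈ Psi a b (σ.1.length + h) ∧ σ.1 <+: ρ.1 ∧ σ.2 <+: ρ.2}

/-- `I_{k,r}(t) := Σ_{ω∈Φ_k} E_r(ω)^t`. -/
def Ih (a : Alph m n → ℝ) (b : Fin m → ℝ) (p : Alph m n → ℝ) (r : ℝ) (k : ℕ) (t : ℝ) : ℝ :=
  ∑' ω : Psi a b k, Er a p r ω.1 ^ t

/-- `Υ_n(t,s) := Σ_{σ∈Ψ_n} (p_{σ_L} q_{σ_R})^t a_{σ_L}^s`. -/
def Ups (a : Alph m n → ℝ) (b : Fin m → ℝ) (p : Alph m n → ℝ) (N : ℕ) (t s : ℝ) : ℝ :=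
  ∑' σ : Psi a b N, (pP p σ.1.1 * qP p σ.1.2) ^ t * aP a σ.1.1 ^ s

/-- `τ_0 := ((1,j_0),(n_{j_0},j_0))`. -/
def tau0 (j0 : Fin m) (h : 2 ≤ n j0) : List (Alph m n) :=
  [⟨j0, ⟨0, by omega⟩⟩, ⟨j0, ⟨n j0 - 1, by omega⟩⟩]

/-- `σ̄` is a bar-extension of `σ ∈ Ψ_l`: `σ̄ ∈ Ψ_{l+2}`, `σ̄_L = σ_L ∗ τ_0`, `σ_R ⪯ σ̄_R`. -/
def BarExt (a : Alph m n → ℝ) (b : Fin m → ℝ) (j0 : Fin m) (h : 2 ≤ n j0)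
    (σ σb : Wd m n) : Prop :=
  σb ∈ Psi a b (σ.1.length + 2) ∧ σb.1 = σ.1 ++ tau0 j0 h ∧ σ.2 <+: σb.2

/-- cylinder set `[σ] ⊆ Φ_∞ = G^ℕ × G_y^ℕ`. -/
def Cyl (σ : Wd m n) : Set ((ℕ → Alph m n) × (ℕ → Fin m)) :=
  {x | (∀ i : ℕ, ∀ hi : i < σ.1.length, x.1 i = σ.1.get ⟨i, hi⟩) ∧
       (∀ i : ℕ, ∀ hi : i < σ.2.length, x.2 i = σ.2.get ⟨i, hi⟩)}

/-- the affine map `f_{ij}(x,y) = (a_{ij} x + c_{ij}, b_j y + d_j)`. -/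
def fmap (a : Alph m n → ℝ) (b : Fin m → ℝ) (c : Alph m n → ℝ) (d : Fin m → ℝ)
    (g : Alph m n) : ℝ × ℝ → ℝ × ℝ :=
  fun x => (a g * x.1 + c g, b g.1 * x.2 + d g.1)

/-- `A_{L,σ} = c_{i_1j_1} + Σ_{p≥2} (∏_{h<p} a_{i_hj_h}) c_{i_pj_p}`. -/
def xL (a c : Alph m n → ℝ) : List (Alph m n) → ℝ
  | [] => 0
  | g :: w => c g + a g * xL a c w

/-- `B_{L,σ} = d_{j_1} + Σ_{p≥2} (∏_{h<p} b_{j_h}) d_{j_p}`. -/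
def yL (b d : Fin m → ℝ) : List (Fin m) → ℝ
  | [] => 0
  | j :: τ => d j + b j * yL b d τ

/-- the approximate square `F_σ = [A_{L,σ}, A_{L,σ}+a_{σ_L}] × [B_{L,σ}, B_{L,σ}+b_{σ_y}]`. -/
def Fsq (a c : Alph m n → ℝ) (b d : Fin m → ℝ) (σ : Wd m n) : Set (ℝ × ℝ) :=
  Set.Icc (xL a c σ.1) (xL a c σ.1 + aP a σ.1) ×ˢ
    Set.Icc (yL b d (sy σ)) (yL b d (sy σ) + bP b (sy σ))

/-- the Euclidean distance on `ℝ²`. -/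
def eudist (x y : ℝ × ℝ) : ℝ := Real.sqrt ((x.1 - y.1) ^ 2 + (x.2 - y.2) ^ 2)

/-- the horizontal distance `d_h(S,T) = inf{|x-x'| : (x,y)∈S, (x',y')∈T}`. -/
def dH (S T : Set (ℝ × ℝ)) : ℝ := sInf {e | ∃ x ∈ S, ∃ y ∈ T, e = |x.1 - y.1|}

/-- the (Euclidean) diameter of a subset of `ℝ²`. -/
def euDiam (S : Set (ℝ × ℝ)) : ℝ := sSup {e | ∃ x ∈ S, ∃ y ∈ S, e = eudist x y}

/-- the `N`-th quantization error of order `r`. -/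
def qerr (μ : Measure (ℝ × ℝ)) (r : ℝ) (N : ℕ) : ℝ :=
  sInf {e : ℝ | ∃ α : Finset (ℝ × ℝ), ∃ hα : α.Nonempty, α.card ≤ N ∧
    e = (∫ x, α.inf' hα (fun y => eudist x y ^ r) ∂μ) ^ (1 / r)}

/-- the topological support of a measure on `ℝ²`. -/
def suppSet (μ : Measure (ℝ × ℝ)) : Set (ℝ × ℝ) :=
  {x | ∀ U : Set (ℝ × ℝ), IsOpen U → x ∈ U → μ U ≠ 0}

/-- the dyadic square `[k 2^{-N}, (k+1) 2^{-N}) × [k' 2^{-N}, (k'+1) 2^{-N})`. -/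
def Dy (N : ℕ) (k : ℤ × ℤ) : Set (ℝ × ℝ) :=
  Set.Ico ((k.1 : ℝ) * (2 : ℝ) ^ (-(N : ℤ))) (((k.1 : ℝ) + 1) * (2 : ℝ) ^ (-(N : ℤ))) ×ˢ
    Set.Ico ((k.2 : ℝ) * (2 : ℝ) ^ (-(N : ℤ))) (((k.2 : ℝ) + 1) * (2 : ℝ) ^ (-(N : ℤ)))


namespace Bern

variable {N : ℕ} [NeZero N]

/-- cumulative sums -/
def cum (w : Fin N → ℝ) (i : Fin N) : ℝ := ∑ j ∈ Finset.univ.filter (fun j : Fin N => j < i), w j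

def dig (w : Fin N → ℝ) (x : ℝ) : Fin N :=
  if h : ∃ i, cum w i ≤ x ∧ x < cum w i + w i then h.choose else default

def nxt (w : Fin N → ℝ) (x : ℝ) : ℝ := (x - cum w (dig w x)) / w (dig w x)

def digs (w : Fin N → ℝ) (x : ℝ) (k : ℕ) : Fin N := dig w ((nxt w)^[k] x)

def base (w : Fin N → ℝ) : List (Fin N) → ℝ
  | [] => 0
  | i :: l => cum w i + w i * base w l

def cylSet {γ : Type*} (l : List γ) : Set (ℕ → γ) :=
  {s | ∀ k (hk : k < l.length), s k = l.get ⟨k, hk⟩}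

variable {w : Fin N → ℝ} (hw : ∀ i, 0 < w i) (hw1 : ∑ i, w i = 1)

include hw

lemma cum_nonneg (i : Fin N) : 0 ≤ cum w i :=
  Finset.sum_nonneg fun j _ => (hw j).le

include hw1 in
lemma cum_add_le_one (i : Fin N) : cum w i + w i ≤ 1 := by
  have : cum w i + w i = ∑ j ∈ insert i (Finset.univ.filter (fun j : Fin N => j < i)), w j := by
    rw [Finset.sum_insert (by simp), cum]
    ring
  rw [this, ← hw1]
  exact Finset.sum_le_sum_of_subset_of_nonneg (Finset.subset_univ _)
    (fun j _ _ => (hw j).le)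

lemma cum_add_le (i j : Fin N) (hij : i < j) : cum w i + w i ≤ cum w j := by
  have hsub : insert i (Finset.univ.filter (fun k : Fin N => k < i)) ⊆
      Finset.univ.filter (fun k : Fin N => k < j) := by
    intro k hk
    simp only [Finset.mem_insert, Finset.mem_filter, Finset.mem_univ, true_and] at *
    rcases hk with rfl | hk
    · exact hij
    · exact hk.trans hij
  calc cum w i + w i = ∑ k ∈ insert i (Finset.univ.filter (fun k : Fin N => k < i)), w k := by
        rw [Finset.sum_insert (by simp), cum]; ring
    _ ≤ cum w j := Finset.sum_le_sum_of_subset_of_nonneg hsub (fun k _ _ => (hw k).le)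

lemma cum_succ (i : Fin N) (h : (i:ℕ)+1 < N) : cum w ⟨(i:ℕ)+1, h⟩ = cum w i + w i := by
  have hset : Finset.univ.filter (fun j : Fin N => j < ⟨(i:ℕ)+1, h⟩) =
      insert i (Finset.univ.filter (fun j : Fin N => j < i)) := by
    ext j
    simp only [Finset.mem_filter, Finset.mem_univ, true_and, Finset.mem_insert, Fin.lt_def]
    constructor
    · intro hj
      rcases Nat.lt_succ_iff_lt_or_eq.1 hj with h1 | h1
      · exact Or.inr h1
      · exact Or.inl (Fin.ext h1)
    · rintro (rfl | hj)
      · omega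
      · omega
  rw [cum, cum, hset, Finset.sum_insert (by simp)]
  ring

lemma dig_unique {x : ℝ} {i j : Fin N} (hi : cum w i ≤ x ∧ x < cum w i + w i)
    (hj : cum w j ≤ x ∧ x < cum w j + w j) : i = j := by
  by_contra hne
  rcases lt_or_gt_of_ne hne with h | h
  · exact absurd (lt_of_lt_of_le hi.2 ((cum_add_le hw i j h).trans hj.1)) (lt_irrefl x)
  · exact absurd (lt_of_lt_of_le hj.2 ((cum_add_le hw j i h).trans hi.1)) (lt_irrefl x)

lemma dig_eq {x : ℝ} {i : Fin N} (h1 : cum w i ≤ x) (h2 : x < cum w i + w i) :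
    dig w x = i := by
  have h : ∃ i, cum w i ≤ x ∧ x < cum w i + w i := ⟨i, h1, h2⟩
  rw [dig, dif_pos h]
  exact dig_unique hw h.choose_spec ⟨h1, h2⟩

include hw1 in
lemma exists_dig {x : ℝ} (h0 : 0 ≤ x) (h1 : x < 1) :
    ∃ i, cum w i ≤ x ∧ x < cum w i + w i := by
  classical
  have hne : (Finset.univ.filter (fun i : Fin N => cum w i ≤ x)).Nonempty := by
    refine ⟨⟨0, Nat.pos_of_ne_zero (NeZero.ne N)⟩, ?_⟩
    simp only [Finset.mem_filter, Finset.mem_univ, true_and]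
    have : cum w ⟨0, Nat.pos_of_ne_zero (NeZero.ne N)⟩ = 0 := by
      rw [cum]
      apply Finset.sum_eq_zero
      intro j hj
      simp only [Finset.mem_filter, Finset.mem_univ, true_and] at hj
      exact absurd hj (by simp [Fin.lt_def])
    rw [this]; exact h0
  set i := (Finset.univ.filter (fun i : Fin N => cum w i ≤ x)).max' hne with hi
  have himem := (Finset.univ.filter (fun i : Fin N => cum w i ≤ x)).max'_mem hne
  rw [← hi] at himem
  simp only [Finset.mem_filter, Finset.mem_univ, true_and] at himem
  refine ⟨i, himem, ?_⟩
  by_contra hcon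
  push_neg at hcon
  -- x ≥ cum i + w i; then i is not the largest index, or x ≥ 1
  by_cases hlast : (i : ℕ) + 1 < N
  · have hmax := Finset.le_max' (Finset.univ.filter (fun i : Fin N => cum w i ≤ x))
      ⟨(i:ℕ)+1, hlast⟩ (by
      simp only [Finset.mem_filter, Finset.mem_univ, true_and]
      rw [cum_succ hw i hlast]
      exact hcon)
    rw [← hi] at hmax
    rw [Fin.le_def] at hmax
    simp at hmax
  · -- i is the last index: cum i + w i = 1
    have hfull : Finset.univ.filter (fun j : Fin N => j < i) = Finset.univ.erase i := by
      ext j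
      simp only [Finset.mem_filter, Finset.mem_univ, true_and, Finset.mem_erase, and_true]
      constructor
      · intro hj; exact Fin.ne_of_lt hj
      · intro hj
        have : (j : ℕ) < N := j.isLt
        have : (j : ℕ) ≤ i := by omega
        rcases lt_or_eq_of_le this with h | h
        · exact h
        · exact absurd (Fin.ext h) hj
    have : cum w i + w i = 1 := by
      rw [cum, hfull, Finset.sum_erase_add _ _ (Finset.mem_univ i), hw1]
    rw [this] at hcon
    exact absurd (lt_of_lt_of_le h1 hcon) (lt_irrefl x)

lemma measurable_dig : Measurable (dig w) := by
  apply measurable_to_countable'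
  intro i
  classical
  have hset : dig w ⁻¹' {i} =
      Set.Ico (cum w i) (cum w i + w i) ∪
        ((⋃ j, Set.Ico (cum w j) (cum w j + w j))ᶜ ∩ (if i = default then Set.univ else ∅)) := by
    ext x
    simp only [Set.mem_preimage, Set.mem_singleton_iff, Set.mem_union, Set.mem_inter_iff,
      Set.mem_compl_iff, Set.mem_iUnion, Set.mem_Ico]
    by_cases h : ∃ j, cum w j ≤ x ∧ x < cum w j + w j
    · constructor
      · intro hdig
        left
        rw [← hdig]
        rw [dig, dif_pos h]
        exact h.choose_spec
      · intro hx
        rcases hx with hx | hx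
        · exact dig_eq hw hx.1 hx.2
        · exact absurd h (by simpa using hx.1)
    · rw [dig, dif_neg h]
      push_neg at h
      constructor
      · intro hd
        right
        refine ⟨fun hex => absurd hex.choose_spec.2 (not_lt.2 (h _ hex.choose_spec.1)), ?_⟩
        rw [← hd]
        simp
      · intro hx
        rcases hx with hx | hx
        · exact absurd hx.2 (not_lt.2 (h i hx.1))
        · split_ifs at hx with hdef
          · exact hdef.symm
          · simp at hx
  rw [hset]
  apply MeasurableSet.union measurableSet_Ico
  apply MeasurableSet.inter
  · exact (MeasurableSet.iUnion fun j => measurableSet_Ico).compl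
  · split_ifs
    · exact MeasurableSet.univ
    · exact MeasurableSet.empty

lemma measurable_nxt : Measurable (nxt w) := by
  have hdig := measurable_dig hw
  have h1 : Measurable fun x => cum w (dig w x) := (measurable_of_countable (cum w)).comp hdig
  have h2 : Measurable fun x => w (dig w x) := (measurable_of_countable w).comp hdig
  exact (measurable_id.sub h1).div h2

lemma measurable_digs : Measurable (digs w) := by
  apply measurable_pi_lambda
  intro k
  exact (measurable_dig hw).comp ((measurable_nxt hw).iterate k)

omit hw in
lemma measurableSet_cylSet {γ : Type*} [MeasurableSpace γ] [MeasurableSingletonClass γ]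
    (l : List γ) : MeasurableSet (cylSet l) := by
  have : cylSet l = ⋂ (k : Fin l.length), {s : ℕ → γ | s k = l.get k} := by
    ext s
    simp only [cylSet, Set.mem_setOf_eq, Set.mem_iInter]
    exact ⟨fun h k => h k k.isLt, fun h k hk => h ⟨k, hk⟩⟩
  rw [this]
  exact MeasurableSet.iInter fun k =>
    (measurable_pi_apply (k : ℕ)) (MeasurableSet.singleton _)

include hw1

lemma base_nonneg (l : List (Fin N)) : 0 ≤ base w l := by
  induction l with
  | nil => simp [base]
  | cons i l ih =>
    have := cum_nonneg hw (w := w) i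
    have := (hw i).le
    simp only [base]
    positivity

lemma prodw_pos (l : List (Fin N)) : 0 < (l.map w).prod := by
  induction l with
  | nil => simp
  | cons i l ih => simpa using mul_pos (hw i) ih

lemma prodw_le_one (l : List (Fin N)) : (l.map w).prod ≤ 1 := by
  induction l with
  | nil => simp
  | cons i l ih =>
    simp only [List.map_cons, List.prod_cons]
    have hwi1 : w i ≤ 1 := by
      have := cum_add_le_one hw hw1 i
      have := cum_nonneg hw (w := w) i
      linarith
    calc w i * (l.map w).prod ≤ 1 * 1 :=
          mul_le_mul hwi1 ih (prodw_pos hw hw1 l).le zero_le_one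
      _ = 1 := by ring

lemma base_add_le_one (l : List (Fin N)) : base w l + (l.map w).prod ≤ 1 := by
  induction l with
  | nil => simp [base]
  | cons i l ih =>
    simp only [base, List.map_cons, List.prod_cons]
    have h1 : base w l + (l.map w).prod ≤ 1 := ih
    have := cum_add_le_one hw hw1 i
    have := hw i
    nlinarith

lemma digs_cyl (l : List (Fin N)) :
    digs w ⁻¹' cylSet l ∩ Set.Ico 0 1 =
      Set.Ico (base w l) (base w l + (l.map w).prod) := by
  induction l with
  | nil =>
    simp only [cylSet, base, List.length_nil, List.map_nil, List.prod_nil]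
    have : {s : ℕ → Fin N | ∀ (k : ℕ) (hk : k < 0), s k = ([] : List (Fin N)).get ⟨k, hk⟩}
        = Set.univ := by
      ext s; simp
    rw [this]
    simp
  | cons i l ih =>
    ext x
    simp only [Set.mem_inter_iff, Set.mem_preimage, Set.mem_Ico]
    constructor
    · rintro ⟨hcyl, hx0, hx1⟩
      have hdig : dig w x = i := by
        have := hcyl 0 (by simp)
        simpa [digs] using this
      obtain ⟨j, hj1, hj2⟩ := exists_dig hw hw1 hx0 hx1
      have hji : j = i := by rw [← hdig, dig_eq hw hj1 hj2]
      subst hji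
      -- x ∈ Ico (cum j) (cum j + w j); nxt x = (x - cum j)/w j
      have hnxt : nxt w x = (x - cum w j) / w j := by rw [nxt, hdig]
      have hnxtmem : digs w (nxt w x) ∈ cylSet l := by
        intro k hk
        have := hcyl (k+1) (by simpa using Nat.succ_lt_succ hk)
        simpa [digs, Function.iterate_succ_apply] using this
      have hnxt01 : nxt w x ∈ Set.Ico (0:ℝ) 1 := by
        rw [hnxt]
        constructor
        · apply div_nonneg (by linarith) (hw j).le
        · rw [div_lt_one (hw j)]; linarith
      have := (Set.ext_iff.1 ih (nxt w x)).1 ⟨hnxtmem, hnxt01⟩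
      simp only [Set.mem_Ico] at this
      rw [hnxt] at this
      rw [le_div_iff₀ (hw j), div_lt_iff₀ (hw j)] at this
      simp only [base, List.map_cons, List.prod_cons]
      constructor
      · nlinarith [this.1]
      · nlinarith [this.2]
    · rintro ⟨hx1, hx2⟩
      simp only [base, List.map_cons, List.prod_cons] at hx1 hx2
      have hbl := base_nonneg hw hw1 l
      have hbu := base_add_le_one hw hw1 l
      have hwp := prodw_pos hw hw1 l
      have hwi := hw i
      have hxlo : cum w i ≤ x := by nlinarith
      have hxhi : x < cum w i + w i := by nlinarith
      have hx0 : (0:ℝ) ≤ x := le_trans (cum_nonneg hw i) hxlo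
      have hx1' : x < 1 := lt_of_lt_of_le hxhi (cum_add_le_one hw hw1 i)
      have hdig : dig w x = i := dig_eq hw hxlo hxhi
      have hnxt : nxt w x = (x - cum w i) / w i := by rw [nxt, hdig]
      have hnxtmem : nxt w x ∈ Set.Ico (base w l) (base w l + (l.map w).prod) := by
        rw [hnxt]
        constructor
        · rw [le_div_iff₀ (hw i)]; nlinarith
        · rw [div_lt_iff₀ (hw i)]; nlinarith
      have := (Set.ext_iff.1 ih (nxt w x)).2 hnxtmem
      refine ⟨?_, hx0, hx1'⟩
      intro k hk
      match k with
      | 0 => simpa [digs] using hdig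
      | Nat.succ k' =>
        have hk' : k' < l.length := by simpa using Nat.lt_of_succ_lt_succ hk
        have := this.1 k' hk'
        simpa [digs, Function.iterate_succ_apply] using this

/-- the Bernoulli (product) measure on `ℕ → Fin N`. -/
def bern (w : Fin N → ℝ) : Measure (ℕ → Fin N) :=
  (volume.restrict (Set.Ico (0:ℝ) 1)).map (digs w)

instance : IsProbabilityMeasure (volume.restrict (Set.Ico (0:ℝ) 1)) := by
  constructor
  rw [Measure.restrict_apply MeasurableSet.univ]
  simp [Real.volume_Ico]

lemma bern_prob : IsProbabilityMeasure (bern w) :=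
  Measure.isProbabilityMeasure_map (measurable_digs hw).aemeasurable

lemma bern_cyl (l : List (Fin N)) :
    bern w (cylSet l) = ENNReal.ofReal ((l.map w).prod) := by
  rw [bern, Measure.map_apply (measurable_digs hw) (measurableSet_cylSet l),
    Measure.restrict_apply ((measurable_digs hw) (measurableSet_cylSet l)),
    digs_cyl hw hw1, Real.volume_Ico]
  congr 1
  ring

end Bern

section BernG

open Bern

variable {γ : Type*} [Fintype γ] [Nonempty γ] [MeasurableSpace γ] [MeasurableSingletonClass γ]

/-- i.i.d. sequence measure on `ℕ → γ` with one-step weights `u`. -/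
def bernG (u : γ → ℝ) : Measure (ℕ → γ) :=
  haveI : NeZero (Fintype.card γ) := ⟨Fintype.card_pos.ne'⟩
  (bern (u ∘ (Fintype.equivFin γ).symm)).map
    (fun s k => (Fintype.equivFin γ).symm (s k))

variable {u : γ → ℝ} (hu : ∀ g, 0 < u g) (hu1 : ∑ g, u g = 1)

include hu hu1

lemma bernG_facts :
    IsProbabilityMeasure (bernG u) ∧
      ∀ l : List γ, bernG u (cylSet l) = ENNReal.ofReal ((l.map u).prod) := by
  haveI : NeZero (Fintype.card γ) := ⟨Fintype.card_pos.ne'⟩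
  have hw : ∀ i, 0 < (u ∘ (Fintype.equivFin γ).symm) i := fun i => hu _
  have hw1 : ∑ i, (u ∘ (Fintype.equivFin γ).symm) i = 1 := by
    rw [← hu1]
    exact Fintype.sum_equiv (Fintype.equivFin γ).symm _ _ (fun i => rfl)
  have hmeas : Measurable
      (fun (s : ℕ → Fin (Fintype.card γ)) k => (Fintype.equivFin γ).symm (s k)) := by
    apply measurable_pi_lambda
    intro k
    exact (measurable_of_countable (Fintype.equivFin γ).symm).comp (measurable_pi_apply k)
  constructor
  · rw [bernG]
    exact @Measure.isProbabilityMeasure_map _ _ _ _ _ (bern_prob hw hw1) _ hmeas.aemeasurable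
  · intro l
    have hpre : (fun (s : ℕ → Fin (Fintype.card γ)) k => (Fintype.equivFin γ).symm (s k)) ⁻¹' (cylSet l)
        = cylSet (l.map (Fintype.equivFin γ)) := by
      ext s
      simp only [cylSet, Set.mem_preimage, Set.mem_setOf_eq, List.length_map]
      constructor
      · intro h k hk
        have := h k (by simpa using hk)
        simp only [List.get_eq_getElem, List.getElem_map] at this ⊢
        rw [← this, Equiv.apply_symm_apply]
      · intro h k hk
        have := h k (by simpa using hk)
        simp only [List.get_eq_getElem, List.getElem_map] at this ⊢
        rw [this, Equiv.symm_apply_apply]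
    rw [bernG, Measure.map_apply hmeas (measurableSet_cylSet l), hpre,
      bern_cyl hw hw1]
    congr 1
    rw [List.map_map]
    congr 1
    ext g
    simp

end BernG

section Comb

variable {m : ℕ} {n : Fin m → ℕ}

/-- all words of length `k` over a finite alphabet. -/
def wordsF (α : Type*) [Fintype α] [DecidableEq α] : ℕ → Finset (List α)
  | 0 => {[]}
  | k+1 => Finset.univ.biUnion fun g => ((wordsF α k).image (g :: ·))

lemma mem_wordsF {α : Type*} [Fintype α] [DecidableEq α] {k : ℕ} {l : List α} :
    l ∈ wordsF α k ↔ l.length = k := by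
  induction k generalizing l with
  | zero => simp [wordsF, List.length_eq_zero_iff]
  | succ k ih =>
    simp only [wordsF, Finset.mem_biUnion, Finset.mem_univ, true_and, Finset.mem_image]
    constructor
    · rintro ⟨g, l', hl', rfl⟩
      simp [ih.1 hl']
    · intro hl
      match l with
      | [] => simp at hl
      | g :: l' => exact ⟨g, l', ih.2 (by simpa using hl), rfl⟩

lemma sum_wordsF {α : Type*} [Fintype α] [DecidableEq α] (f : α → ℝ) (k : ℕ) :
    ∑ l ∈ wordsF α k, (l.map f).prod = (∑ g, f g) ^ k := by
  induction k with
  | zero => simp [wordsF]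
  | succ k ih =>
    have hdisj : ((Finset.univ : Finset α) : Set α).PairwiseDisjoint
        (fun g => (wordsF α k).image (g :: ·)) := by
      intro g _ g' _ hne
      rw [Function.onFun, Finset.disjoint_left]
      rintro l hl hl'
      simp only [Finset.mem_image] at hl hl'
      obtain ⟨x, _, rfl⟩ := hl
      obtain ⟨y, _, h⟩ := hl'
      exact hne ((List.cons_eq_cons.mp h).1.symm)
    rw [wordsF, Finset.sum_biUnion hdisj]
    have hpiece : ∀ g : α, ∑ l ∈ (wordsF α k).image (g :: ·), (l.map f).prod
        = f g * (∑ g, f g) ^ k := by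
      intro g
      rw [Finset.sum_image (fun x _ y _ h => (List.cons_eq_cons.mp h).2)]
      simp only [List.map_cons, List.prod_cons]
      rw [← Finset.mul_sum, ih]
    rw [Finset.sum_congr rfl (fun g _ => hpiece g), ← Finset.sum_mul, pow_succ]
    ring
lemma prod_map_pos {α : Type*} {f : α → ℝ} (hf : ∀ x, 0 < f x) (l : List α) :
    0 < (l.map f).prod := by
  induction l with
  | nil => simp
  | cons x l ih => simpa using mul_pos (hf x) ih

lemma prod_map_le_one {α : Type*} {f : α → ℝ} (hf : ∀ x, 0 < f x) (hf1 : ∀ x, f x ≤ 1)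
    (l : List α) : (l.map f).prod ≤ 1 := by
  induction l with
  | nil => simp
  | cons x l ih =>
    simp only [List.map_cons, List.prod_cons]
    calc f x * (l.map f).prod ≤ 1 * 1 :=
          mul_le_mul (hf1 x) ih (prod_map_pos hf l).le zero_le_one
      _ = 1 := by ring

variable (b : Fin m → ℝ)

/-- the stopping Finset: words `τ` with `(prod over τ⁻) ≥ c > (prod over τ)`. -/
def stopF : ℕ → ℝ → Finset (List (Fin m))
  | 0, _ => ∅
  | fuel+1, c => Finset.univ.biUnion fun j =>
      if b j < c then ({[j]} : Finset (List (Fin m)))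
      else (stopF fuel (c / b j)).image (j :: ·)

lemma stopF_head {fuel : ℕ} {c : ℝ} {j : Fin m} {τ : List (Fin m)}
    (h : τ ∈ (if b j < c then ({[j]} : Finset (List (Fin m)))
      else (stopF b fuel (c / b j)).image (j :: ·))) : ∃ τ', τ = j :: τ' := by
  split_ifs at h with hc
  · simp only [Finset.mem_singleton] at h
    exact ⟨[], h⟩
  · simp only [Finset.mem_image] at h
    obtain ⟨τ', _, rfl⟩ := h
    exact ⟨τ', rfl⟩

variable {b} {B : ℝ} (hb : ∀ j, 0 < b j) (hbB : ∀ j, b j ≤ B) (hB1 : B < 1)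

include hb hbB hB1

lemma mem_stopF [NeZero m] :
    ∀ (fuel : ℕ) (c : ℝ), 0 < c → c ≤ 1 → B ^ fuel < c → ∀ τ : List (Fin m),
      (τ ∈ stopF b fuel c ↔
        τ ≠ [] ∧ c ≤ (τ.dropLast.map b).prod ∧ (τ.map b).prod < c) := by
  have hB0 : 0 < B := lt_of_lt_of_le (hb default) (hbB default)
  intro fuel
  induction fuel with
  | zero =>
    intro c hc hc1 hf
    simp only [pow_zero] at hf
    exact absurd (lt_of_lt_of_le hf hc1) (lt_irrefl 1)
  | succ fuel ih =>
    intro c hc hc1 hf τ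
    constructor
    · intro hτ
      simp only [stopF, Finset.mem_biUnion, Finset.mem_univ, true_and] at hτ
      obtain ⟨j, hj⟩ := hτ
      obtain ⟨τ', rfl⟩ := stopF_head b hj
      split_ifs at hj with hjc
      · simp only [Finset.mem_singleton, List.cons.injEq] at hj
        have hτ' : τ' = [] := hj.2
        subst hτ'
        refine ⟨by simp, by simpa using hc1, by simpa using hjc⟩
      · push_neg at hjc
        simp only [Finset.mem_image, List.cons.injEq] at hj
        obtain ⟨τ'', hτ'', heq, rfl⟩ := hj
        have hc' : 0 < c / b j := div_pos hc (hb j)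
        have hc1' : c / b j ≤ 1 := by
          rw [div_le_one (hb j)]; exact hjc
        have hf' : B ^ fuel < c / b j := by
          rw [lt_div_iff₀ (hb j)]
          calc B ^ fuel * b j ≤ B ^ fuel * B :=
                mul_le_mul_of_nonneg_left (hbB j) (pow_pos hB0 fuel).le
            _ = B ^ (fuel + 1) := by ring
            _ < c := hf
        have := (ih _ hc' hc1' hf' τ'').1 hτ''
        obtain ⟨hne, h1, h2⟩ := this
        refine ⟨by simp, ?_, ?_⟩
        · rw [List.dropLast_cons_of_ne_nil hne]
          simp only [List.map_cons, List.prod_cons]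
          have := (div_le_iff₀ (hb j)).1 h1
          linarith
        · simp only [List.map_cons, List.prod_cons]
          have := (lt_div_iff₀ (hb j)).1 h2
          linarith
    · rintro ⟨hne, h1, h2⟩
      match τ with
      | [] => exact absurd rfl hne
      | j :: τ' =>
        simp only [stopF, Finset.mem_biUnion, Finset.mem_univ, true_and]
        refine ⟨j, ?_⟩
        match τ' with
        | [] =>
          simp only [List.map_cons, List.map_nil, List.prod_cons, List.prod_nil,
            mul_one] at h2
          rw [if_pos h2]
          simp
        | j' :: τ'' =>
          have hne' : (j' :: τ'' : List (Fin m)) ≠ [] := by simp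
          rw [List.dropLast_cons_of_ne_nil hne'] at h1
          simp only [List.map_cons, List.prod_cons] at h1 h2
          have hcbj : c ≤ b j := by
            have hle1 : ((j' :: τ'').dropLast.map b).prod ≤ 1 :=
              prod_map_le_one hb (fun x => le_of_lt (lt_of_le_of_lt (hbB x) hB1)) _
            calc c ≤ b j * ((j' :: τ'').dropLast.map b).prod := by
                  simpa using h1
              _ ≤ b j * 1 := mul_le_mul_of_nonneg_left hle1 (hb j).le
              _ = b j := by ring
          rw [if_neg (not_lt.2 hcbj)]
          simp only [Finset.mem_image]
          refine ⟨j' :: τ'', ?_, rfl⟩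
          have hc' : 0 < c / b j := div_pos hc (hb j)
          have hc1' : c / b j ≤ 1 := by rw [div_le_one (hb j)]; exact hcbj
          have hf' : B ^ fuel < c / b j := by
            rw [lt_div_iff₀ (hb j)]
            calc B ^ fuel * b j ≤ B ^ fuel * B :=
                  mul_le_mul_of_nonneg_left (hbB j) (pow_pos hB0 fuel).le
              _ = B ^ (fuel + 1) := by ring
              _ < c := hf
          rw [ih _ hc' hc1' hf']
          refine ⟨by simp, ?_, ?_⟩
          · rw [div_le_iff₀ (hb j)]
            nlinarith [h1]
          · rw [lt_div_iff₀ (hb j)]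
            simp only [List.map_cons, List.prod_cons]
            nlinarith [h2]

lemma sum_stopF [NeZero m] (ν : Fin m → ℝ) (hν1 : ∑ j, ν j = 1) :
    ∀ (fuel : ℕ) (c : ℝ), 0 < c → c ≤ 1 → B ^ fuel < c →
      ∑ τ ∈ stopF b fuel c, (τ.map ν).prod = 1 := by
  have hB0 : 0 < B := lt_of_lt_of_le (hb default) (hbB default)
  intro fuel
  induction fuel with
  | zero =>
    intro c hc hc1 hf
    simp only [pow_zero] at hf
    exact absurd (lt_of_lt_of_le hf hc1) (lt_irrefl 1)
  | succ fuel ih =>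
    intro c hc hc1 hf
    have hdisj : ((Finset.univ : Finset (Fin m)) : Set (Fin m)).PairwiseDisjoint
        (fun j => if b j < c then ({[j]} : Finset (List (Fin m)))
          else (stopF b fuel (c / b j)).image (j :: ·)) := by
      intro j _ j' _ hne
      rw [Function.onFun, Finset.disjoint_left]
      intro τ hτ hτ'
      obtain ⟨x, hx⟩ := stopF_head b hτ
      obtain ⟨y, hy⟩ := stopF_head b hτ'
      rw [hx] at hy
      exact hne (List.cons_eq_cons.mp hy).1
    rw [stopF, Finset.sum_biUnion hdisj]
    have hpiece : ∀ j : Fin m,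
        ∑ τ ∈ (if b j < c then ({[j]} : Finset (List (Fin m)))
          else (stopF b fuel (c / b j)).image (j :: ·)), (τ.map ν).prod = ν j := by
      intro j
      split_ifs with hjc
      · simp
      · push_neg at hjc
        rw [Finset.sum_image (fun x _ y _ h => (List.cons_eq_cons.mp h).2)]
        simp only [List.map_cons, List.prod_cons]
        rw [← Finset.mul_sum]
        have hc' : 0 < c / b j := div_pos hc (hb j)
        have hc1' : c / b j ≤ 1 := by rw [div_le_one (hb j)]; exact hjc
        have hf' : B ^ fuel < c / b j := by
          rw [lt_div_iff₀ (hb j)]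
          calc B ^ fuel * b j ≤ B ^ fuel * B :=
                mul_le_mul_of_nonneg_left (hbB j) (pow_pos hB0 fuel).le
            _ = B ^ (fuel + 1) := by ring
            _ < c := hf
        rw [ih _ hc' hc1' hf', mul_one]
    rw [Finset.sum_congr rfl (fun j _ => hpiece j), hν1]

end Comb

section PsiF

variable {m : ℕ} {n : Fin m → ℕ}

lemma bP_pos {b : Fin m → ℝ} (hb : ∀ j, 0 < b j) (τ : List (Fin m)) : 0 < bP b τ :=
  prod_map_pos hb τ

lemma aP_pos {a : Alph m n → ℝ} (ha : ∀ g, 0 < a g) (l : List (Alph m n)) : 0 < aP a l :=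
  prod_map_pos ha l

lemma bP_append {b : Fin m → ℝ} (x y : List (Fin m)) :
    bP b (x ++ y) = bP b x * bP b y := by
  simp [bP]

lemma aP_le_bP {a : Alph m n → ℝ} {b : Fin m → ℝ}
    (hab : ∀ g : Alph m n, 0 < a g ∧ a g < b g.1) (l : List (Alph m n)) :
    aP a l ≤ bP b (l.map Sigma.fst) := by
  induction l with
  | nil => simp [aP, bP]
  | cons g l ih =>
    simp only [aP, bP, List.map_cons, List.prod_cons] at *
    have h1 := (hab g).1
    have h2 := (hab g).2
    have h3 : 0 < (List.map (a ·) l).prod := prod_map_pos (fun g => (hab g).1) l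
    calc a g * (l.map a).prod ≤ b g.1 * (l.map a).prod := by nlinarith
      _ ≤ b g.1 * ((l.map Sigma.fst).map b).prod := by
          have hb1 : 0 < b g.1 := lt_trans h1 h2
          rw [List.map_map] at *
          nlinarith [ih]

lemma aP_ge_pow {a : Alph m n → ℝ} {A : ℝ} (hA : 0 < A) (hAa : ∀ g, A ≤ a g)
    {k : ℕ} (l : List (Alph m n)) (hl : l.length = k) : A ^ k ≤ aP a l := by
  induction l generalizing k with
  | nil => simp only [List.length_nil] at hl; simp [aP, ← hl]
  | cons g l ih =>
    simp only [List.length_cons] at hl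
    subst hl
    simp only [aP, List.map_cons, List.prod_cons, pow_succ]
    have h1 := ih rfl
    have h2 : 0 < aP a l := aP_pos (fun g => lt_of_lt_of_le hA (hAa g)) l
    rw [aP] at h1 h2
    calc A ^ l.length * A ≤ a g * (l.map a).prod := by nlinarith [hAa g, pow_pos hA l.length]
      _ = a g * (l.map a).prod := rfl

/-- `Ψ_k` as an explicit Finset. -/
def psiF (a : Alph m n → ℝ) (b : Fin m → ℝ) (fuel k : ℕ) : Finset (Wd m n) :=
  (wordsF (Alph m n) k).biUnion fun L =>
    (stopF b fuel (aP a L / bP b (L.map Sigma.fst))).image fun τ => (L, τ)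

variable {a : Alph m n → ℝ} {b : Fin m → ℝ} {B : ℝ} {fuel k : ℕ}

lemma psi_iff_stop [NeZero m] (hb : ∀ j, 0 < b j) (hbB : ∀ j, b j ≤ B) (hB1 : B < 1)
    (hab : ∀ g : Alph m n, 0 < a g ∧ a g < b g.1)
    (hf : ∀ L : List (Alph m n), L.length = k → B ^ fuel < aP a L / bP b (L.map Sigma.fst))
    (σ : Wd m n) :
    σ ∈ Psi a b k ↔ σ.1.length = k ∧
      σ.2 ∈ stopF b fuel (aP a σ.1 / bP b (σ.1.map Sigma.fst)) := by
  obtain ⟨L, τ⟩ := σ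
  have ha : ∀ g, 0 < a g := fun g => (hab g).1
  have hbPLy : 0 < bP b (L.map Sigma.fst) := bP_pos hb _
  have haPL : 0 < aP a L := aP_pos ha L
  have hc0 : 0 < aP a L / bP b (L.map Sigma.fst) := div_pos haPL hbPLy
  have hc1 : aP a L / bP b (L.map Sigma.fst) ≤ 1 := by
    rw [div_le_one hbPLy]; exact aP_le_bP hab L
  constructor
  · rintro ⟨hlen, hτlen, h1, h2⟩
    have hne : τ ≠ [] := by
      intro h; rw [h] at hτlen; simp at hτlen
    refine ⟨hlen, ?_⟩
    rw [mem_stopF hb hbB hB1 fuel _ hc0 hc1 (hf L hlen) τ]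
    refine ⟨hne, ?_, ?_⟩
    · rw [div_le_iff₀ hbPLy]
      have hsy : (sy (L, τ)).dropLast = L.map Sigma.fst ++ τ.dropLast := by
        rw [sy]
        exact List.dropLast_append_of_ne_nil hne
      rw [hsy, bP_append] at h1
      calc aP a L ≤ bP b (L.map Sigma.fst) * bP b τ.dropLast := h1
        _ = (τ.dropLast.map b).prod * bP b (L.map Sigma.fst) := by simp only [bP]; ring
    · rw [lt_div_iff₀ hbPLy]
      rw [sy, bP_append] at h2
      calc (τ.map b).prod * bP b (L.map Sigma.fst)
          = bP b (L.map Sigma.fst) * bP b τ := by simp only [bP]; ring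
        _ < aP a L := h2
  · rintro ⟨hlen, hstop⟩
    rw [mem_stopF hb hbB hB1 fuel _ hc0 hc1 (hf L hlen) τ] at hstop
    obtain ⟨hne, h1, h2⟩ := hstop
    rw [div_le_iff₀ hbPLy] at h1
    rw [lt_div_iff₀ hbPLy] at h2
    refine ⟨hlen, ?_, ?_, ?_⟩
    · exact List.length_pos_iff.2 hne
    · have hsy : (sy (L, τ)).dropLast = L.map Sigma.fst ++ τ.dropLast := by
        rw [sy]
        exact List.dropLast_append_of_ne_nil hne
      rw [hsy, bP_append]
      calc aP a L ≤ (τ.dropLast.map b).prod * bP b (L.map Sigma.fst) := h1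
        _ = bP b (L.map Sigma.fst) * bP b τ.dropLast := by simp only [bP]; ring
    · rw [sy, bP_append]
      calc bP b (L.map Sigma.fst) * bP b τ
          = (τ.map b).prod * bP b (L.map Sigma.fst) := by simp only [bP]; ring
        _ < aP a L := h2

lemma mem_psiF [NeZero m] (hb : ∀ j, 0 < b j) (hbB : ∀ j, b j ≤ B) (hB1 : B < 1)
    (hab : ∀ g : Alph m n, 0 < a g ∧ a g < b g.1)
    (hf : ∀ L : List (Alph m n), L.length = k → B ^ fuel < aP a L / bP b (L.map Sigma.fst))
    (σ : Wd m n) : σ ∈ psiF a b fuel k ↔ σ ∈ Psi a b k := by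
  rw [psi_iff_stop hb hbB hB1 hab hf σ]
  obtain ⟨L, τ⟩ := σ
  simp only [psiF, Finset.mem_biUnion, Finset.mem_image, mem_wordsF]
  constructor
  · rintro ⟨L', hL', τ', hτ', heq⟩
    injection heq with h1 h2
    subst h1
    subst h2
    exact ⟨hL', hτ'⟩
  · rintro ⟨hlen, hstop⟩
    exact ⟨L, hlen, τ, hstop, rfl⟩

lemma sum_psiF [NeZero m] (hb : ∀ j, 0 < b j) (hbB : ∀ j, b j ≤ B) (hB1 : B < 1)
    (hab : ∀ g : Alph m n, 0 < a g ∧ a g < b g.1)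
    (hf : ∀ L : List (Alph m n), L.length = k → B ^ fuel < aP a L / bP b (L.map Sigma.fst))
    (μ₁ : Alph m n → ℝ) (ν₁ : Fin m → ℝ) (hν1 : ∑ j, ν₁ j = 1) :
    ∑ σ ∈ psiF a b fuel k, (σ.1.map μ₁).prod * (σ.2.map ν₁).prod = (∑ g, μ₁ g) ^ k := by
  classical
  have ha : ∀ g, 0 < a g := fun g => (hab g).1
  have hdisj : ((wordsF (Alph m n) k : Finset (List (Alph m n))) : Set (List (Alph m n))).PairwiseDisjoint
      (fun L => (stopF b fuel (aP a L / bP b (L.map Sigma.fst))).image fun τ => (L, τ)) := by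
    intro L _ L' _ hne
    rw [Function.onFun, Finset.disjoint_left]
    intro σ hσ hσ'
    simp only [Finset.mem_image] at hσ hσ'
    obtain ⟨x, _, rfl⟩ := hσ
    obtain ⟨y, _, h⟩ := hσ'
    exact hne (congrArg Prod.fst h).symm
  rw [psiF, Finset.sum_biUnion hdisj]
  have hpiece : ∀ L ∈ wordsF (Alph m n) k,
      ∑ σ ∈ (stopF b fuel (aP a L / bP b (L.map Sigma.fst))).image (fun τ => (L, τ)),
        (σ.1.map μ₁).prod * (σ.2.map ν₁).prod = (L.map μ₁).prod := by
    intro L hL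
    rw [Finset.sum_image (fun x _ y _ h => congrArg Prod.snd h)]
    simp only
    rw [← Finset.mul_sum]
    have hbPLy : 0 < bP b (L.map Sigma.fst) := bP_pos hb _
    have haPL : 0 < aP a L := aP_pos ha L
    have hc0 : 0 < aP a L / bP b (L.map Sigma.fst) := div_pos haPL hbPLy
    have hc1 : aP a L / bP b (L.map Sigma.fst) ≤ 1 := by
      rw [div_le_one hbPLy]; exact aP_le_bP hab L
    rw [sum_stopF hb hbB hB1 ν₁ hν1 fuel _ hc0 hc1 (hf L (mem_wordsF.1 hL)), mul_one]
  rw [Finset.sum_congr rfl hpiece, sum_wordsF]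

lemma bP_dropLast_le {b : Fin m → ℝ} {bL : ℝ} (hb : ∀ j, 0 < b j) (hbL : ∀ j, bL ≤ b j)
    (hbL0 : 0 < bL) :
    ∀ τ : List (Fin m), τ ≠ [] → bL * bP b τ.dropLast ≤ bP b τ := by
  intro τ
  induction τ with
  | nil => intro h; exact absurd rfl h
  | cons j τ ih =>
    intro _
    match τ with
    | [] => simpa [bP] using hbL j
    | j' :: τ' =>
      have hne : (j' :: τ' : List (Fin m)) ≠ [] := by simp
      have := ih hne
      rw [List.dropLast_cons_of_ne_nil hne]
      simp only [bP, List.map_cons, List.prod_cons] at *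
      nlinarith [hb j, bP_pos hb (j' :: τ').dropLast, bP_pos hb τ']

lemma prod_mu {a p : Alph m n → ℝ} {b : Fin m → ℝ}
    (ha : ∀ g, 0 < a g) (hb : ∀ j, 0 < b j) (hp : ∀ g, 0 < p g) (v r t : ℝ) :
    ∀ l : List (Alph m n),
      (l.map (fun g => p g ^ t * a g ^ (r * t) * (b g.1 / a g) ^ v)).prod
      = pP p l ^ t * aP a l ^ (r * t) * (bP b (l.map Sigma.fst) / aP a l) ^ v := by
  intro l
  induction l with
  | nil => simp [pP, aP, bP]
  | cons g l ih =>
    have hpPl : 0 < (l.map p).prod := prod_map_pos hp l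
    have haPl : 0 < (l.map a).prod := prod_map_pos ha l
    have hbPl : 0 < ((l.map Sigma.fst).map b).prod := prod_map_pos hb _
    simp only [pP, aP, bP, List.map_cons, List.prod_cons] at *
    rw [ih]
    rw [Real.mul_rpow (hp g).le hpPl.le, Real.mul_rpow (ha g).le haPl.le,
      show (b g.1 * ((l.map Sigma.fst).map b).prod) / (a g * (l.map a).prod)
        = (b g.1 / a g) * (((l.map Sigma.fst).map b).prod / (l.map a).prod) by
          rw [div_mul_div_comm],
      Real.mul_rpow (div_nonneg (hb g.1).le (ha g).le) (div_nonneg hbPl.le haPl.le)]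
    ring

lemma prod_nu {b q : Fin m → ℝ} (hb : ∀ j, 0 < b j) (hq : ∀ j, 0 < q j) (v t : ℝ) :
    ∀ τ : List (Fin m),
      (τ.map (fun j => q j ^ t * b j ^ v)).prod = (τ.map q).prod ^ t * bP b τ ^ v := by
  intro τ
  induction τ with
  | nil => simp [bP]
  | cons j τ ih =>
    have hqPl : 0 < (τ.map q).prod := prod_map_pos hq τ
    have hbPl : 0 < (τ.map b).prod := prod_map_pos hb τ
    simp only [bP, List.map_cons, List.prod_cons] at *
    rw [ih, Real.mul_rpow (hq j).le hqPl.le, Real.mul_rpow (hb j).le hbPl.le]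
    ring

lemma w_eq_Er {a p : Alph m n → ℝ} {b : Fin m → ℝ}
    (ha : ∀ g, 0 < a g) (hb : ∀ j, 0 < b j) (hp : ∀ g, 0 < p g) (hq : ∀ j, 0 < qf p j)
    (v r t : ℝ) (σ : Wd m n) :
    (σ.1.map (fun g => p g ^ t * a g ^ (r * t) * (b g.1 / a g) ^ v)).prod *
      (σ.2.map (fun j => qf p j ^ t * b j ^ v)).prod
      = Er a p r σ ^ t * (bP b (sy σ) / aP a σ.1) ^ v := by
  rw [prod_mu ha hb hp v r t σ.1, prod_nu hb hq v t σ.2]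
  have haP : 0 < aP a σ.1 := aP_pos ha σ.1
  have hpP : 0 < pP p σ.1 := prod_map_pos hp σ.1
  have hqP : 0 < (σ.2.map (qf p)).prod := prod_map_pos hq σ.2
  have hbLy : 0 < bP b (σ.1.map Sigma.fst) := bP_pos hb _
  have hbR : 0 < bP b σ.2 := bP_pos hb σ.2
  have hEr : Er a p r σ ^ t = pP p σ.1 ^ t * (σ.2.map (qf p)).prod ^ t * aP a σ.1 ^ (r * t) := by
    rw [Er, qP, Real.mul_rpow (mul_pos hpP hqP).le (Real.rpow_pos_of_pos haP r).le,
      Real.mul_rpow hpP.le hqP.le, Real.rpow_mul haP.le r t]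
  rw [hEr, sy, bP_append,
    show bP b (σ.1.map Sigma.fst) * bP b σ.2 / aP a σ.1
      = (bP b (σ.1.map Sigma.fst) / aP a σ.1) * bP b σ.2 by ring,
    Real.mul_rpow (div_nonneg hbLy.le haP.le) hbR.le]
  ring

end PsiF


theorem stmt15
    (m : ℕ) (hm : 2 ≤ m) (n : Fin m → ℕ) (hn : ∀ j, 1 ≤ n j)
    (a : Alph m n → ℝ) (b : Fin m → ℝ)
    (hab : ∀ g : Alph m n, 0 < a g ∧ a g < b g.1 ∧ b g.1 < 1)
    (p : Alph m n → ℝ) (hp : ∀ g, 0 < p g) (hp1 : ∑ g : Alph m n, p g = 1)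
    (r : ℝ) (hr : 0 < r)
    (t : ℝ) (ht0 : 0 < t) (ht1 : t < 1)
    (hlim : Tendsto (fun k : ℕ => Real.log (Ih a b p r k t) / k) atTop (𝓝 0)) :
    ∃ lam : Measure ((ℕ → Alph m n) × (ℕ → Fin m)), IsProbabilityMeasure lam ∧
      ∃ cst Cst : ℝ, 0 < cst ∧ cst ≤ Cst ∧
        ∀ σ ∈ PsiStar a b,
          ENNReal.ofReal (cst * Er a p r σ ^ t) ≤ lam (Cyl σ) ∧
          lam (Cyl σ) ≤ ENNReal.ofReal (Cst * Er a p r σ ^ t) := by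
  classical
  haveI : NeZero m := ⟨by omega⟩
  haveI hAne : Nonempty (Alph m n) :=
    ⟨⟨⟨0, by omega⟩, ⟨0, by have := hn ⟨0, by omega⟩; omega⟩⟩⟩
  haveI : MeasurableSingletonClass (Alph m n) := by
    constructor
    intro x
    apply MeasurableSpace.measurableSet_iInf.2
    intro j
    exact (MeasurableSet.of_discrete (α := Fin (n j))
      (s := Sigma.mk (β := fun i => Fin (n i)) j ⁻¹' {x}))
  -- basic positivity facts
  have ha0 : ∀ g : Alph m n, 0 < a g := fun g => (hab g).1
  have hb0 : ∀ j : Fin m, 0 < b j := by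
    intro j
    have g : Alph m n := ⟨j, ⟨0, by have := hn j; omega⟩⟩
    exact lt_trans (hab ⟨j, ⟨0, by have := hn j; omega⟩⟩).1
      (hab ⟨j, ⟨0, by have := hn j; omega⟩⟩).2.1
  have hb1 : ∀ j : Fin m, b j < 1 := by
    intro j
    exact (hab ⟨j, ⟨0, by have := hn j; omega⟩⟩).2.2
  have hab' : ∀ g : Alph m n, 0 < a g ∧ a g < b g.1 := fun g => ⟨(hab g).1, (hab g).2.1⟩
  -- extremal values
  obtain ⟨gmin, hgmin⟩ := Finite.exists_min a
  obtain ⟨jmin, hjmin⟩ := Finite.exists_min b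
  obtain ⟨jmax, hjmax⟩ := Finite.exists_max b
  have hA0 : 0 < a gmin := ha0 gmin
  have hbL0 : 0 < b jmin := hb0 jmin
  have hbL1 : b jmin < 1 := hb1 jmin
  have hB1 : b jmax < 1 := hb1 jmax
  -- q facts
  have hq0 : ∀ j, 0 < qf p j := by
    intro j
    apply Finset.sum_pos (fun i _ => hp _)
    exact ⟨⟨0, by have := hn j; omega⟩, Finset.mem_univ _⟩
  have hqsum : ∑ j, qf p j = 1 := by
    rw [← hp1, ← Finset.univ_sigma_univ, Finset.sum_sigma]
    rfl
  have hq1 : ∀ j, qf p j ≤ 1 := by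
    intro j
    rw [← hqsum]
    exact Finset.single_le_sum (fun i _ => (hq0 i).le) (Finset.mem_univ j)
  -- choose the exponent v
  obtain ⟨v, hv0, hfv⟩ :
      ∃ v : ℝ, 0 ≤ v ∧ ∑ j, qf p j ^ t * b j ^ v = 1 := by
    have hcont : Continuous fun v : ℝ => ∑ j, qf p j ^ t * b j ^ v := by
      apply continuous_finset_sum
      intro j _
      refine continuous_const.mul (Continuous.congr
        (f := fun x : ℝ => Real.exp (Real.log (b j) * x))
        (Real.continuous_exp.comp (continuous_const.mul continuous_id)) fun x => ?_)
      exact (Real.rpow_def_of_pos (hb0 j) x).symm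
    have hf0 : 1 ≤ ∑ j, qf p j ^ t * b j ^ (0:ℝ) := by
      simp only [Real.rpow_zero, mul_one]
      rw [← hqsum]
      apply Finset.sum_le_sum
      intro j _
      calc qf p j = qf p j ^ (1:ℝ) := (Real.rpow_one _).symm
        _ ≤ qf p j ^ t := Real.rpow_le_rpow_of_exponent_ge (hq0 j) (hq1 j) ht1.le
    have htend : Tendsto (fun v : ℝ => ∑ j, qf p j ^ t * b j ^ v) atTop (𝓝 0) := by
      have : Tendsto (fun v : ℝ => ∑ j, qf p j ^ t * b j ^ v) atTop
          (𝓝 (∑ j : Fin m, 0)) := by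
        apply tendsto_finset_sum
        intro j _
        have h := tendsto_rpow_atTop_of_base_lt_one (b j) (by linarith [hb0 j]) (hb1 j)
        simpa using h.const_mul (qf p j ^ t)
      simpa using this
    obtain ⟨V, hV1, hV0⟩ :=
      ((htend.eventually (gt_mem_nhds (by norm_num : (0:ℝ) < 1))).and
        (eventually_ge_atTop (0:ℝ))).exists
    have := intermediate_value_Icc' hV0 hcont.continuousOn (a := 0) (b := V)
      ⟨le_of_lt hV1, hf0⟩
    obtain ⟨v, hv, hveq⟩ := this
    exact ⟨v, hv.1, hveq⟩
  -- the weight functions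
  have hν₁0 : ∀ j, 0 < qf p j ^ t * b j ^ v := fun j =>
    mul_pos (Real.rpow_pos_of_pos (hq0 j) t) (Real.rpow_pos_of_pos (hb0 j) v)
  have hμ₁0 : ∀ g : Alph m n, 0 < p g ^ t * a g ^ (r * t) * (b g.1 / a g) ^ v := fun g =>
    mul_pos (mul_pos (Real.rpow_pos_of_pos (hp g) t) (Real.rpow_pos_of_pos (ha0 g) (r*t)))
      (Real.rpow_pos_of_pos (div_pos (hb0 g.1) (ha0 g)) v)
  set μ₁ : Alph m n → ℝ := fun g => p g ^ t * a g ^ (r * t) * (b g.1 / a g) ^ v with hμ₁def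
  set ν₁ : Fin m → ℝ := fun j => qf p j ^ t * b j ^ v with hν₁def
  set Z : ℝ := ∑ g, μ₁ g with hZdef
  have hZ0 : 0 < Z := Finset.sum_pos (fun g _ => hμ₁0 g) Finset.univ_nonempty
  -- pointwise comparison on Psi
  have hkey : ∀ (k : ℕ) (σ : Wd m n), σ ∈ Psi a b k →
      Er a p r σ ^ t * b jmin ^ v ≤ (σ.1.map μ₁).prod * (σ.2.map ν₁).prod ∧
      (σ.1.map μ₁).prod * (σ.2.map ν₁).prod ≤ Er a p r σ ^ t := by
    intro k σ hσ
    obtain ⟨hlen, hτlen, h1, h2⟩ := hσ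
    have haP : 0 < aP a σ.1 := aP_pos ha0 σ.1
    have hbsy : 0 < bP b (sy σ) := bP_pos hb0 _
    have hsyne : sy σ ≠ [] := by
      rw [sy]
      apply List.append_ne_nil_of_right_ne_nil
      intro hc
      rw [hc] at hτlen
      simp at hτlen
    have hx1 : bP b (sy σ) / aP a σ.1 < 1 := by
      rw [div_lt_one haP]; exact h2
    have hxL : b jmin ≤ bP b (sy σ) / aP a σ.1 := by
      rw [le_div_iff₀ haP]
      have hstep := bP_dropLast_le hb0 hjmin hbL0 (sy σ) hsyne
      nlinarith [bP_pos hb0 (sy σ).dropLast]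
    have hweq := w_eq_Er ha0 hb0 hp hq0 v r t σ
    rw [hμ₁def, hν₁def, hweq]
    have hEr0 : 0 ≤ Er a p r σ ^ t := by
      apply Real.rpow_nonneg
      rw [Er]
      have h1 : 0 < pP p σ.1 := prod_map_pos hp σ.1
      have h2 : 0 < qP p σ.2 := by
        rw [qP]; exact prod_map_pos hq0 σ.2
      exact mul_nonneg (mul_nonneg h1.le h2.le) (Real.rpow_nonneg haP.le r)
    constructor
    · apply mul_le_mul_of_nonneg_left _ hEr0
      exact Real.rpow_le_rpow hbL0.le hxL hv0
    · have h1 : (bP b (sy σ) / aP a σ.1) ^ v ≤ 1 :=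
        Real.rpow_le_one (div_nonneg hbsy.le haP.le) hx1.le hv0
      nlinarith [hEr0, h1, Real.rpow_nonneg (div_nonneg hbsy.le haP.le) v]
  -- fuel for the stopping Finsets
  choose fuel hfuel using fun k : ℕ =>
    exists_pow_lt_of_lt_one (pow_pos hA0 k) hB1
  have hfl : ∀ (k : ℕ) (L : List (Alph m n)), L.length = k →
      b jmax ^ fuel k < aP a L / bP b (L.map Sigma.fst) := by
    intro k L hL
    have h1 : a gmin ^ k ≤ aP a L := aP_ge_pow hA0 hgmin L hL
    have h2 : bP b (L.map Sigma.fst) ≤ 1 := by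
      rw [bP]
      exact prod_map_le_one hb0 (fun j => (hb1 j).le) _
    calc b jmax ^ fuel k < a gmin ^ k := hfuel k
      _ ≤ aP a L := h1
      _ ≤ aP a L / bP b (L.map Sigma.fst) :=
          le_div_self (le_trans (pow_pos hA0 k).le h1) (bP_pos hb0 _) h2
  have hmem : ∀ (k : ℕ) (σ : Wd m n), σ ∈ psiF a b (fuel k) k ↔ σ ∈ Psi a b k :=
    fun k => mem_psiF hb0 hjmax hB1 hab' (hfl k)
  -- Ih as a finite sum
  have hIh : ∀ k : ℕ, Ih a b p r k t = ∑ σ ∈ psiF a b (fuel k) k, Er a p r σ ^ t := by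
    intro k
    have hset : Psi a b k = ↑(psiF a b (fuel k) k) := by
      ext σ
      rw [Finset.mem_coe, hmem k σ]
    rw [Ih, hset]
    exact Finset.tsum_subtype' (psiF a b (fuel k) k) (fun σ => Er a p r σ ^ t)
  -- sum of the weights
  have hsumw : ∀ k : ℕ,
      ∑ σ ∈ psiF a b (fuel k) k, (σ.1.map μ₁).prod * (σ.2.map ν₁).prod = Z ^ k := by
    intro k
    rw [hμ₁def, hν₁def]
    exact sum_psiF hb0 hjmax hB1 hab' (hfl k) _ _ hfv
  -- two-sided bound on Ih
  have hIlow : ∀ k : ℕ, Z ^ k ≤ Ih a b p r k t := by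
    intro k
    rw [hIh k, ← hsumw k]
    apply Finset.sum_le_sum
    intro σ hσ
    exact (hkey k σ ((hmem k σ).1 hσ)).2
  have hIupp : ∀ k : ℕ, Ih a b p r k t ≤ Z ^ k * (b jmin ^ v)⁻¹ := by
    intro k
    rw [hIh k, ← hsumw k, Finset.sum_mul]
    apply Finset.sum_le_sum
    intro σ hσ
    have h := (hkey k σ ((hmem k σ).1 hσ)).1
    have hbv : 0 < b jmin ^ v := Real.rpow_pos_of_pos hbL0 v
    calc Er a p r σ ^ t = Er a p r σ ^ t * b jmin ^ v * (b jmin ^ v)⁻¹ := by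
          field_simp
      _ ≤ (σ.1.map μ₁).prod * (σ.2.map ν₁).prod * (b jmin ^ v)⁻¹ :=
          mul_le_mul_of_nonneg_right h (inv_nonneg.2 hbv.le)
  -- Z = 1 via the limit hypothesis
  have hZ1 : Z = 1 := by
    have hbv : 0 < b jmin ^ v := Real.rpow_pos_of_pos hbL0 v
    have hIpos : ∀ k : ℕ, 0 < Ih a b p r k t := fun k =>
      lt_of_lt_of_le (pow_pos hZ0 k) (hIlow k)
    have hlogZ : Tendsto (fun k : ℕ => Real.log (Ih a b p r k t) / k) atTop
        (𝓝 (Real.log Z)) := by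
      refine tendsto_of_tendsto_of_tendsto_of_le_of_le'
        (g := fun _ : ℕ => Real.log Z)
        (h := fun k : ℕ => Real.log Z + Real.log (b jmin ^ v)⁻¹ * (1 / k))
        tendsto_const_nhds ?_ ?_ ?_
      · have : Tendsto (fun k : ℕ => Real.log (b jmin ^ v)⁻¹ * (1 / k)) atTop (𝓝 0) := by
          simpa using tendsto_one_div_atTop_nhds_zero_nat.const_mul (Real.log (b jmin ^ v)⁻¹)
        simpa using tendsto_const_nhds.add this
      · filter_upwards [eventually_ge_atTop 1] with k hk
        have hk0 : (0:ℝ) < k := by exact_mod_cast hk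
        rw [le_div_iff₀ hk0]
        calc Real.log Z * k = Real.log (Z ^ k) := by rw [Real.log_pow]; ring
          _ ≤ Real.log (Ih a b p r k t) := Real.log_le_log (pow_pos hZ0 k) (hIlow k)
      · filter_upwards [eventually_ge_atTop 1] with k hk
        have hk0 : (0:ℝ) < k := by exact_mod_cast hk
        rw [div_le_iff₀ hk0]
        have h1 : Real.log (Ih a b p r k t) ≤ Real.log (Z ^ k * (b jmin ^ v)⁻¹) :=
          Real.log_le_log (hIpos k) (hIupp k)
        calc Real.log (Ih a b p r k t) ≤ Real.log (Z ^ k * (b jmin ^ v)⁻¹) := h1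
          _ = k * Real.log Z + Real.log (b jmin ^ v)⁻¹ := by
              rw [Real.log_mul (pow_pos hZ0 k).ne' (inv_pos.2 hbv).ne', Real.log_pow]
          _ = (Real.log Z + Real.log (b jmin ^ v)⁻¹ * (1 / k)) * k := by
              field_simp
    have h0 : Real.log Z = 0 := tendsto_nhds_unique hlogZ hlim
    have := Real.exp_log hZ0
    rw [h0, Real.exp_zero] at this
    exact this.symm
  -- construct the measure
  have hμ₁1 : ∑ g, μ₁ g = 1 := by rw [← hZdef, hZ1]
  obtain ⟨hprobA, hcylA⟩ := bernG_facts hμ₁0 (by rw [← hμ₁def] at hμ₁1 ⊢; exact hμ₁1)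
  obtain ⟨hprobB, hcylB⟩ := bernG_facts hν₁0 hfv
  refine ⟨(bernG μ₁).prod (bernG ν₁), ?_, b jmin ^ v, 1, Real.rpow_pos_of_pos hbL0 v,
    Real.rpow_le_one hbL0.le hbL1.le hv0, ?_⟩
  · haveI := hprobA
    haveI := hprobB
    infer_instance
  · intro σ hσ
    obtain ⟨k, hk1, hσk⟩ := hσ
    have hcyleq : Cyl σ = Bern.cylSet σ.1 ×ˢ Bern.cylSet σ.2 := by
      ext x
      simp only [Cyl, Bern.cylSet, Set.mem_setOf_eq, Set.mem_prod]
    have hw0 : 0 ≤ (σ.1.map μ₁).prod * (σ.2.map ν₁).prod := by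
      apply mul_nonneg
      · exact (prod_map_pos hμ₁0 σ.1).le
      · exact (prod_map_pos hν₁0 σ.2).le
    rw [hcyleq, Measure.prod_prod, hcylA, hcylB,
      ← ENNReal.ofReal_mul (prod_map_pos hμ₁0 σ.1).le]
    obtain ⟨hlow, hupp⟩ := hkey k σ hσk
    constructor
    · apply ENNReal.ofReal_le_ofReal
      calc b jmin ^ v * Er a p r σ ^ t = Er a p r σ ^ t * b jmin ^ v := by ring
        _ ≤ (σ.1.map μ₁).prod * (σ.2.map ν₁).prod := hlow
    · apply ENNReal.ofReal_le_ofReal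
      calc (σ.1.map μ₁).prod * (σ.2.map ν₁).prod ≤ Er a p r σ ^ t := hupp
        _ = 1 * Er a p r σ ^ t := by ring


end

end LGQ
end

section
/- Assume s_r > 0 satisfies lim_{l→∞} (1/l)·log Σ_{σ∈Ψ_l} E_r(σ)^{s_r/(s_r+r)} = 0, and put t_r := s_r/(s_r + r). Then there exists a constant H > 0 such that for every n ≥ 1 and every σ ∈ S_{n,r}: Σ_{ω∈G_1(σ)} E_r(ω)^{t_r} ≤ H · E_r(σ)^{t_r}. -/
open Filter MeasureTheory
open scoped BigOperators ENNReal NNReal Topology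

namespace LGQ

noncomputable section

variable {m : ℕ} {n : Fin m → ℕ}

theorem stmt17
    (m : ℕ) (hm : 2 ≤ m) (n : Fin m → ℕ) (hn : ∀ j, 1 ≤ n j)
    (a : Alph m n → ℝ) (b : Fin m → ℝ)
    (hab : ∀ g : Alph m n, 0 < a g ∧ a g < b g.1 ∧ b g.1 < 1)
    (p : Alph m n → ℝ) (hp : ∀ g, 0 < p g) (hp1 : ∑ g : Alph m n, p g = 1)
    (r : ℝ) (hr : 0 < r)
    (s : ℝ) (hs : 0 < s)
    (hlim : Tendsto
      (fun l : ℕ => Real.log (∑' σ : Psi a b l, Er a p r σ.1 ^ (s / (s + r))) / l)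
      atTop (𝓝 0)) :
    ∃ H : ℝ, 0 < H ∧ ∀ N : ℕ, 1 ≤ N → ∀ σ ∈ Snr a b p r N,
      (∑' ω : G1 a b p r N σ, Er a p r ω.1 ^ (s / (s + r))) ≤
        H * Er a p r σ ^ (s / (s + r)) := by
  classical
  have hm1 : 0 < m := by omega
  have j0 : Fin m := ⟨0, hm1⟩
  haveI : Nonempty (Fin m) := ⟨j0⟩
  haveI hne_fin : ∀ j : Fin m, Nonempty (Fin (n j)) := fun j => ⟨⟨0, hn j⟩⟩
  haveI : Nonempty (Alph m n) := ⟨⟨j0, ⟨0, hn j0⟩⟩⟩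
  set t := s / (s + r) with ht_def
  have ht : 0 < t := div_pos hs (by linarith)
  have ha0 : ∀ g, 0 < a g := fun g => (hab g).1
  have ha1 : ∀ g, a g < 1 := fun g => (hab g).2.1.trans (hab g).2.2
  have hq0 : ∀ j, 0 < qf p j := fun j =>
    Finset.sum_pos (fun i _ => hp _) Finset.univ_nonempty
  -- positivity of etaLo
  have hpLo : 0 < pLo p := by
    obtain ⟨g0, hg0⟩ := Finite.exists_min p
    exact lt_of_lt_of_le (hp g0) (le_ciInf hg0)
  have hqLo : 0 < qLo p := by
    obtain ⟨i0, hi0⟩ := Finite.exists_min (qf p)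
    exact lt_of_lt_of_le (hq0 i0) (le_ciInf hi0)
  have haLo : 0 < aLo a := by
    obtain ⟨g0, hg0⟩ := Finite.exists_min a
    exact lt_of_lt_of_le (ha0 g0) (le_ciInf hg0)
  have hη : 0 < etaLo a b p r :=
    mul_pos (mul_pos hpLo (zpow_pos hqLo _)) (Real.rpow_pos_of_pos haLo r)
  -- qf p j < 1 for each j
  have hsumq : ∑ j, qf p j = 1 := by
    rw [← hp1, ← Finset.univ_sigma_univ, Finset.sum_sigma]
    rfl
  have hqj1 : ∀ j, qf p j < 1 := by
    intro j
    haveI : Nontrivial (Fin m) := Fin.nontrivial_iff_two_le.mpr hm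
    obtain ⟨j', hj'⟩ := exists_ne j
    calc qf p j < ∑ k, qf p k :=
          Finset.single_lt_sum hj' (Finset.mem_univ j) (Finset.mem_univ j')
            (hq0 j') (fun k _ _ => (hq0 k).le)
      _ = 1 := hsumq
  -- the maxima qH, aH
  have hFu : (Finset.univ : Finset (Fin m)).Nonempty := Finset.univ_nonempty
  have hGu : (Finset.univ : Finset (Alph m n)).Nonempty := Finset.univ_nonempty
  set qH := Finset.univ.sup' hFu (qf p) with hqH_def
  set aH := Finset.univ.sup' hGu a with haH_def
  have hqHle : ∀ j, qf p j ≤ qH := fun j => Finset.le_sup' _ (Finset.mem_univ j)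
  have haHle : ∀ g, a g ≤ aH := fun g => Finset.le_sup' _ (Finset.mem_univ g)
  have hqH0 : 0 < qH := lt_of_lt_of_le (hq0 j0) (hqHle j0)
  have haH0 : 0 < aH := lt_of_lt_of_le (ha0 ⟨j0, ⟨0, hn j0⟩⟩) (haHle _)
  have hqH1 : qH < 1 := (Finset.sup'_lt_iff hFu).mpr (fun j _ => hqj1 j)
  have haH1 : aH < 1 := (Finset.sup'_lt_iff hGu).mpr (fun g _ => ha1 g)
  have haHr1 : aH ^ r < 1 := Real.rpow_lt_one haH0.le haH1 hr
  obtain ⟨K2, hK2⟩ := exists_pow_lt_of_lt_one hη hqH1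
  obtain ⟨K1, hK1⟩ := exists_pow_lt_of_lt_one hη haHr1
  -- target finite set and its cardinality
  set T : Set (List (Alph m n) × List (Fin m)) :=
    {l : List (Alph m n) | l.length < K1} ×ˢ {l : List (Fin m) | l.length < K2} with hT_def
  have hTfin : T.Finite := (List.finite_length_lt _ K1).prod (List.finite_length_lt _ K2)
  set C := T.ncard with hC_def
  refine ⟨((C : ℝ) + 1) / etaLo a b p r ^ t, by positivity, ?_⟩
  intro N hN σ hσ
  obtain ⟨-, hσ1, hσ2⟩ := hσ
  have hErpos : ∀ ρ : Wd m n, 0 < Er a p r ρ := by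
    intro ρ
    have h1 : ∀ w : List (Alph m n), 0 < pP p w := fun w =>
      List.prod_pos (by intro x hx; obtain ⟨g, -, rfl⟩ := List.mem_map.mp hx; exact hp g)
    have h2 : ∀ v : List (Fin m), 0 < qP p v := fun v =>
      List.prod_pos (by intro x hx; obtain ⟨j, -, rfl⟩ := List.mem_map.mp hx; exact hq0 j)
    have h3 : ∀ w : List (Alph m n), 0 < aP a w := fun w =>
      List.prod_pos (by intro x hx; obtain ⟨g, -, rfl⟩ := List.mem_map.mp hx; exact ha0 g)
    exact mul_pos (mul_pos (h1 _) (h2 _)) (Real.rpow_pos_of_pos (h3 _) r)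
  have pPpos : ∀ w : List (Alph m n), 0 < pP p w := fun w =>
    List.prod_pos (by intro x hx; obtain ⟨g, -, rfl⟩ := List.mem_map.mp hx; exact hp g)
  have qPpos : ∀ v : List (Fin m), 0 < qP p v := fun v =>
    List.prod_pos (by intro x hx; obtain ⟨j, -, rfl⟩ := List.mem_map.mp hx; exact hq0 j)
  have aPpos : ∀ w : List (Alph m n), 0 < aP a w := fun w =>
    List.prod_pos (by intro x hx; obtain ⟨g, -, rfl⟩ := List.mem_map.mp hx; exact ha0 g)
  have pP_append : ∀ w1 w2 : List (Alph m n), pP p (w1 ++ w2) = pP p w1 * pP p w2 := by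
    intro w1 w2; simp [pP]
  have aP_append : ∀ w1 w2 : List (Alph m n), aP a (w1 ++ w2) = aP a w1 * aP a w2 := by
    intro w1 w2; simp [aP]
  have qP_append : ∀ v1 v2 : List (Fin m), qP p (v1 ++ v2) = qP p v1 * qP p v2 := by
    intro v1 v2; simp [qP]
  have pP_le : ∀ w : List (Alph m n), pP p w ≤ qP p (w.map Sigma.fst) := by
    intro w; induction w with
    | nil => simp [pP, qP]
    | cons g w ih =>
      have h1 : p g ≤ qf p g.1 :=
        Finset.single_le_sum (f := fun i => p ⟨g.1, i⟩) (fun i _ => (hp _).le)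
          (Finset.mem_univ g.2)
      have e1 : pP p (g :: w) = p g * pP p w := by simp [pP]
      have e2 : qP p ((g :: w).map Sigma.fst) = qf p g.1 * qP p (w.map Sigma.fst) := by
        simp [qP]
      rw [e1, e2]
      exact mul_le_mul h1 ih (pPpos w).le (hq0 g.1).le
  have qP_le_pow : ∀ v : List (Fin m), qP p v ≤ qH ^ v.length := by
    intro v; induction v with
    | nil => simp [qP]
    | cons j v ih =>
      have e1 : qP p (j :: v) = qf p j * qP p v := by simp [qP]
      rw [e1, List.length_cons, pow_succ']
      exact mul_le_mul (hqHle j) ih (qPpos v).le hqH0.le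
  have aP_le_pow : ∀ w : List (Alph m n), aP a w ≤ aH ^ w.length := by
    intro w; induction w with
    | nil => simp [aP]
    | cons g w ih =>
      have e1 : aP a (g :: w) = a g * aP a w := by simp [aP]
      rw [e1, List.length_cons, pow_succ']
      exact mul_le_mul (haHle g) ih (aPpos w).le haH0.le
  have hErσ : 0 < Er a p r σ := hErpos σ
  set S := G1 a b p r N σ with hS_def
  set f : Wd m n → List (Alph m n) × List (Fin m) :=
    fun ω => (ω.1.drop σ.1.length, (sy ω).drop (sy σ).length) with hf_def
  -- key bounds for elements of S
  have hbound : ∀ ω ∈ S, (f ω).1.length < K1 ∧ (f ω).2.length < K2 ∧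
      Er a p r ω ≤ Er a p r σ / etaLo a b p r := by
    intro ω hω
    obtain ⟨⟨-, hE1, hE2⟩, hpre1, hpre2⟩ := hω
    obtain ⟨u, hu⟩ := hpre1
    obtain ⟨v, hv⟩ := hpre2
    have hdrop1 : ω.1.drop σ.1.length = u := by rw [← hu, List.drop_left]
    have hdrop2 : (sy ω).drop (sy σ).length = v := by rw [← hv, List.drop_left]
    have hkey : u.map Sigma.fst ++ ω.2 = σ.2 ++ v := by
      have h1 : sy ω = σ.1.map Sigma.fst ++ (u.map Sigma.fst ++ ω.2) := by
        show ω.1.map Sigma.fst ++ ω.2 = _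
        rw [← hu, List.map_append, List.append_assoc]
      have h2 : sy ω = σ.1.map Sigma.fst ++ (σ.2 ++ v) := by
        rw [← hv]
        show (σ.1.map Sigma.fst ++ σ.2) ++ v = _
        rw [List.append_assoc]
      exact List.append_cancel_left (h1.symm.trans h2)
    have hEω : Er a p r ω =
        (pP p σ.1 * aP a σ.1 ^ r * aP a u ^ r) * (pP p u * qP p ω.2) := by
      show pP p ω.1 * qP p ω.2 * aP a ω.1 ^ r = _
      rw [← hu, pP_append, aP_append, Real.mul_rpow (aPpos σ.1).le (aPpos u).le]
      ring
    have hqsplit : qP p (u.map Sigma.fst) * qP p ω.2 = qP p σ.2 * qP p v := by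
      rw [← qP_append, ← qP_append, hkey]
    have hEω_le : Er a p r ω ≤ Er a p r σ * (qP p v * aP a u ^ r) := by
      rw [hEω]
      have hnn : 0 ≤ pP p σ.1 * aP a σ.1 ^ r * aP a u ^ r :=
        mul_nonneg (mul_nonneg (pPpos _).le (Real.rpow_nonneg (aPpos _).le r))
          (Real.rpow_nonneg (aPpos _).le r)
      calc (pP p σ.1 * aP a σ.1 ^ r * aP a u ^ r) * (pP p u * qP p ω.2)
          ≤ (pP p σ.1 * aP a σ.1 ^ r * aP a u ^ r) *
            (qP p (u.map Sigma.fst) * qP p ω.2) :=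
            mul_le_mul_of_nonneg_left
              (mul_le_mul_of_nonneg_right (pP_le u) (qPpos ω.2).le) hnn
        _ = Er a p r σ * (qP p v * aP a u ^ r) := by
            rw [hqsplit]
            show _ = pP p σ.1 * qP p σ.2 * aP a σ.1 ^ r * (qP p v * aP a u ^ r)
            ring
    have hlow : etaLo a b p r * Er a p r σ < Er a p r ω := by
      calc etaLo a b p r * Er a p r σ < etaLo a b p r * etaLo a b p r ^ N :=
            mul_lt_mul_of_pos_left hσ2 hη
        _ = etaLo a b p r ^ (N + 1) := (pow_succ' _ _).symm
        _ ≤ Er a p r ω := hE1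
    have hfac : etaLo a b p r < qP p v * aP a u ^ r := by
      have h' := hlow.trans_le hEω_le
      rw [mul_comm (Er a p r σ)] at h'
      exact lt_of_mul_lt_mul_right h' hErσ.le
    have hqv1 : qP p v ≤ 1 := (qP_le_pow v).trans (pow_le_one₀ hqH0.le hqH1.le)
    have hau1 : aP a u ^ r ≤ 1 :=
      Real.rpow_le_one (aPpos u).le
        ((aP_le_pow u).trans (pow_le_one₀ haH0.le haH1.le)) hr.le
    have hqv : etaLo a b p r < qP p v := by
      have : qP p v * aP a u ^ r ≤ qP p v * 1 :=
        mul_le_mul_of_nonneg_left hau1 (qPpos v).le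
      rw [mul_one] at this; exact lt_of_lt_of_le hfac this
    have hau : etaLo a b p r < aP a u ^ r := by
      have : qP p v * aP a u ^ r ≤ 1 * (aP a u ^ r) :=
        mul_le_mul_of_nonneg_right hqv1 (Real.rpow_nonneg (aPpos u).le r)
      rw [one_mul] at this; exact lt_of_lt_of_le hfac this
    refine ⟨?_, ?_, ?_⟩
    · show (ω.1.drop σ.1.length).length < K1
      rw [hdrop1]
      by_contra h; push_neg at h
      have h1 : aP a u ^ r ≤ (aH ^ u.length) ^ r :=
        Real.rpow_le_rpow (aPpos u).le (aP_le_pow u) hr.le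
      have h2 : (aH ^ u.length) ^ r = (aH ^ r) ^ u.length := by
        rw [← Real.rpow_natCast aH u.length, ← Real.rpow_natCast (aH ^ r) u.length,
          ← Real.rpow_mul haH0.le, ← Real.rpow_mul haH0.le, mul_comm]
      have h3 : (aH ^ r) ^ u.length ≤ (aH ^ r) ^ K1 :=
        pow_le_pow_of_le_one (Real.rpow_nonneg haH0.le r) haHr1.le h
      rw [h2] at h1
      linarith
    · show ((sy ω).drop (sy σ).length).length < K2
      rw [hdrop2]
      by_contra h; push_neg at h
      have h1 : qH ^ v.length ≤ qH ^ K2 := pow_le_pow_of_le_one hqH0.le hqH1.le h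
      have h2 := (qP_le_pow v).trans h1
      linarith
    · have h1 : etaLo a b p r ^ N ≤ Er a p r σ / etaLo a b p r := by
        rw [le_div_iff₀ hη, ← pow_succ]
        exact hσ1
      exact (le_of_lt hE2).trans h1
  -- S is finite with cardinality at most C
  have hmaps : Set.MapsTo f S T := by
    intro ω hω
    exact ⟨(hbound ω hω).1, (hbound ω hω).2.1⟩
  have hdropsy : ∀ ρ : Wd m n, (sy ρ).drop ρ.1.length = ρ.2 := by
    intro ρ
    have h : (ρ.1.map Sigma.fst ++ ρ.2).drop (ρ.1.map Sigma.fst).length = ρ.2 :=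
      List.drop_left
    simpa [sy] using h
  have hinj : Set.InjOn f S := by
    intro ω hω ω' hω' hfeq
    simp only [hf_def, Prod.mk.injEq] at hfeq
    obtain ⟨hf1, hf2⟩ := hfeq
    obtain ⟨u, hu⟩ := hω.2.1
    obtain ⟨u', hu'⟩ := hω'.2.1
    obtain ⟨v, hv⟩ := hω.2.2
    obtain ⟨v', hv'⟩ := hω'.2.2
    have e1 : ω.1 = σ.1 ++ ω.1.drop σ.1.length := by
      rw [← hu, List.drop_left]
    have e1' : ω'.1 = σ.1 ++ ω'.1.drop σ.1.length := by
      rw [← hu', List.drop_left]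
    have h1 : ω.1 = ω'.1 := by rw [e1, e1', hf1]
    have e2 : sy ω = sy σ ++ (sy ω).drop (sy σ).length := by
      rw [← hv, List.drop_left]
    have e2' : sy ω' = sy σ ++ (sy ω').drop (sy σ).length := by
      rw [← hv', List.drop_left]
    have h2 : sy ω = sy ω' := by rw [e2, e2', hf2]
    have h3 : ω.2 = ω'.2 := by
      rw [← hdropsy ω, ← hdropsy ω', h1, h2]
    exact Prod.ext h1 h3
  have hSfin : S.Finite :=
    Set.Finite.of_finite_image (hTfin.subset hmaps.image_subset) hinj
  have hcard : S.ncard ≤ C := Set.ncard_le_ncard_of_injOn f hmaps hinj hTfin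
  haveI := hSfin.fintype
  have htsum : (∑' ω : S, Er a p r (ω : Wd m n) ^ t) = ∑ ω : S, Er a p r (ω : Wd m n) ^ t :=
    tsum_fintype _
  have hBnn : 0 ≤ (Er a p r σ / etaLo a b p r) ^ t :=
    Real.rpow_nonneg (div_nonneg hErσ.le hη.le) t
  calc (∑' ω : S, Er a p r (ω : Wd m n) ^ t)
      = ∑ ω : S, Er a p r (ω : Wd m n) ^ t := htsum
    _ ≤ (Finset.univ : Finset S).card • ((Er a p r σ / etaLo a b p r) ^ t) := by
        apply Finset.sum_le_card_nsmul
        intro ω _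
        exact Real.rpow_le_rpow (hErpos ω.1).le ((hbound ω.1 ω.2).2.2) ht.le
    _ = (S.ncard : ℝ) * ((Er a p r σ / etaLo a b p r) ^ t) := by
        rw [nsmul_eq_mul]
        congr 2
        rw [← Nat.card_coe_set_eq, Nat.card_eq_fintype_card, Finset.card_univ]
    _ ≤ ((C : ℝ) + 1) * ((Er a p r σ / etaLo a b p r) ^ t) := by
        apply mul_le_mul_of_nonneg_right _ hBnn
        have : (S.ncard : ℝ) ≤ (C : ℝ) := by exact_mod_cast hcard
        linarith
    _ = ((C : ℝ) + 1) / etaLo a b p r ^ t * Er a p r σ ^ t := by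
        rw [Real.div_rpow hErσ.le hη.le]
        ring

end

end LGQ
end
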